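/- Let (X,T) be a minimal topological dynamical system and let α be an admissible cover of X. Then the symbolic representation (X_α, σ) is a minimal topological dynamical system. -/

import Mathlib

open Filter Topology Function Set

/-- Iterates of a homeomorphism indexed by `ℕ`. -/
def hpowNat {X : Type*} [TopologicalSpace X] (T : X ≃ₜ X) : ℕ → X ≃ₜ X
  | 0 => Homeomorph.refl X
  | n + 1 => (hpowNat T n).trans T

/-- Iterates of a homeomorphism indexed by `ℤ`. -/
def hpowInt {X : Type*} [TopologicalSpace X] (T : X ≃ₜ X) : ℤ → X ≃ₜ X
  | Int.ofNat n => hpowNat T n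
  | Int.negSucc n => (hpowNat T (n + 1)).symm

/-- The `n`-th iterate (`n : ℤ`) of the homeomorphism `T`, as a map. -/
def hpow {X : Type*} [TopologicalSpace X] (T : X ≃ₜ X) (n : ℤ) : X → X :=
  ⇑(hpowInt T n)

/-- The (two-sided) orbit of `x` under the homeomorphism `T`. -/
def zorbit {X : Type*} [TopologicalSpace X] (T : X ≃ₜ X) (x : X) : Set X :=
  Set.range fun n : ℤ => hpow T n x

/-- `(X,T)` is a minimal t.d.s.: every orbit is dense. -/
def IsMinimalTDS {X : Type*} [TopologicalSpace X] (T : X ≃ₜ X) : Prop :=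
  ∀ x : X, Dense (zorbit T x)

def shiftE (E : Type*) : (ℤ → E) ≃ (ℤ → E) where
  toFun f n := f (n + 1)
  invFun f n := f (n - 1)
  left_inv f := by funext n; simp
  right_inv f := by funext n; simp

/-- The shift homeomorphism `σ` on `ℤ → E`: `(σ f) n = f (n + 1)`. -/
def shiftH (E : Type*) [TopologicalSpace E] : (ℤ → E) ≃ₜ (ℤ → E) where
  toEquiv := shiftE E
  continuous_toFun := continuous_pi fun n => continuous_apply (n + 1)
  continuous_invFun := continuous_pi fun n => continuous_apply (n - 1)

/-- A finite family `A` of subsets of `X` is an admissible cover: the sets are closed,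
cover `X`, intersect pairwise only in their boundaries, and the union of their
boundaries has empty interior. -/
def IsAdmissibleCover {X : Type*} [TopologicalSpace X] {ι : Type*} (A : ι → Set X) : Prop :=
  (⋃ i, A i) = Set.univ ∧ (∀ i, IsClosed (A i)) ∧
  (∀ i j, i ≠ j → A i ∩ A j = frontier (A i) ∩ frontier (A j)) ∧
  interior (⋃ i, frontier (A i)) = ∅

/-- The set of orbit points hitting the boundaries of the cover:
`D_α = ⋃_{n ∈ ℤ} Tⁿ (∂α)`. -/
def coverBoundaryOrbit {X : Type*} [TopologicalSpace X] (T : X ≃ₜ X) {k : ℕ}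
    (A : Fin k → Set X) : Set X :=
  ⋃ n : ℤ, hpow T n '' (⋃ i, frontier (A i))

/-- The symbolic representation `X_α` of `(X, α)`: the closure in `{0, …, k-1}^ℤ` of the set
of `α`-names of points of `X \ D_α` (the `α`-name `a` of `x` satisfies `Tⁿ x ∈ A (a n)`
for all `n`). -/
def SymbolicRep {X : Type*} [TopologicalSpace X] (T : X ≃ₜ X) {k : ℕ}
    (A : Fin k → Set X) : Set (ℤ → Fin k) :=
  closure {a : ℤ → Fin k |
    ∃ x : X, x ∉ coverBoundaryOrbit T A ∧ ∀ n : ℤ, hpow T n x ∈ A (a n)}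

section AuxHpow
variable {X : Type*} [TopologicalSpace X] (T : X ≃ₜ X)

lemma hpowNat_toEquiv (n : ℕ) : (hpowNat T n).toEquiv = (T.toEquiv : Equiv.Perm X) ^ n := by
  induction n with
  | zero => rfl
  | succ n ih =>
    show ((hpowNat T n).trans T).toEquiv = _
    rw [pow_succ']
    exact congrArg (fun e => Equiv.trans e T.toEquiv) ih

lemma hpowInt_toEquiv (n : ℤ) : (hpowInt T n).toEquiv = (T.toEquiv : Equiv.Perm X) ^ n := by
  cases n with
  | ofNat n => rw [Int.ofNat_eq_coe, zpow_natCast]; exact hpowNat_toEquiv T n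
  | negSucc n => rw [zpow_negSucc, ← hpowNat_toEquiv T (n + 1)]; rfl

lemma hpow_eq (n : ℤ) : hpow T n = ⇑((T.toEquiv : Equiv.Perm X) ^ n) := by
  rw [hpow, ← hpowInt_toEquiv]; rfl

lemma hpow_add (m n : ℤ) (x : X) : hpow T (m + n) x = hpow T m (hpow T n x) := by
  simp only [hpow_eq, zpow_add, Equiv.Perm.mul_apply]

lemma hpow_zero (x : X) : hpow T 0 x = x := rfl

lemma hpow_neg_cancel (n : ℤ) (x : X) : hpow T (-n) (hpow T n x) = x := by
  rw [← hpow_add, neg_add_cancel, hpow_zero]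

lemma continuous_hpow (n : ℤ) : Continuous (hpow T n) := (hpowInt T n).continuous

end AuxHpow

lemma shift_hpow {E : Type*} [TopologicalSpace E] (n : ℤ) (a : ℤ → E) (m : ℤ) :
    hpow (shiftH E) n a m = a (m + n) := by
  induction n using Int.induction_on generalizing a m with
  | zero => simp; rfl
  | succ i ih =>
    rw [show ((i : ℤ) + 1) = 1 + i by ring, hpow_add]
    show hpow (shiftH E) (i : ℤ) a (m + 1) = _
    rw [ih, add_assoc, add_comm (1 : ℤ) i]
  | pred i ih =>
    rw [show (-(i : ℤ) - 1) = -1 + -i by ring, hpow_add]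
    show hpow (shiftH E) (-i : ℤ) a (m - 1) = _
    rw [ih]; ring_nf

lemma mem_closure_pi_discrete {E : Type*} [TopologicalSpace E] [DiscreteTopology E]
    {S : Set (ℤ → E)} {b : ℤ → E} :
    b ∈ closure S ↔ ∀ s : Finset ℤ, ∃ f ∈ S, ∀ i ∈ s, f i = b i := by
  constructor
  · intro hb s
    have hopen : IsOpen {f : ℤ → E | ∀ i ∈ s, f i = b i} := by
      have : {f : ℤ → E | ∀ i ∈ s, f i = b i} = ⋂ i ∈ s, (fun f : ℤ → E => f i) ⁻¹' {b i} := by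
        ext f; simp
      rw [this]
      exact isOpen_biInter_finset fun i _ =>
        (continuous_apply i).isOpen_preimage _ (isOpen_discrete _)
    obtain ⟨f, hf1, hf2⟩ := mem_closure_iff.1 hb _ hopen (fun i _ => rfl)
    exact ⟨f, hf2, hf1⟩
  · intro h
    rw [mem_closure_iff_nhds]
    intro t ht
    rw [nhds_pi] at ht
    obtain ⟨I, hIfin, u, hu, hsub⟩ := Filter.mem_pi.1 ht
    obtain ⟨f, hfS, hf⟩ := h hIfin.toFinset
    refine ⟨f, hsub fun i hi => ?_, hfS⟩
    rw [hf i (hIfin.mem_toFinset.2 hi)]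
    have := hu i
    rwa [nhds_discrete, Filter.mem_pure] at this

/-- **Lemma A.9.** If `(X,T)` is a minimal t.d.s. and `α` is an admissible cover of `X`,
then the symbolic representation `(X_α, σ)` is a minimal t.d.s.: `X_α` is invariant under
the shift and every orbit in `X_α` is dense in `X_α`. -/
theorem symbolicRep_minimal
    {X : Type*} [MetricSpace X] [CompactSpace X] (T : X ≃ₜ X) (hT : IsMinimalTDS T)
    {k : ℕ} (A : Fin k → Set X) (hA : IsAdmissibleCover A) :
    (∀ a ∈ SymbolicRep T A, ∀ n : ℤ,
      hpow (shiftH (Fin k)) n a ∈ SymbolicRep T A) ∧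
    ∀ a ∈ SymbolicRep T A,
      SymbolicRep T A ⊆ closure (zorbit (shiftH (Fin k)) a) := by
  obtain ⟨hcover, hclosed, hpair, hint⟩ := hA
  set N : Set (ℤ → Fin k) :=
    {a | ∃ x : X, x ∉ coverBoundaryOrbit T A ∧ ∀ n : ℤ, hpow T n x ∈ A (a n)} with hNdef
  have hrep : SymbolicRep T A = closure N := rfl
  -- N is invariant under all powers of the shift
  have hNinv : ∀ n : ℤ, Set.MapsTo (hpow (shiftH (Fin k)) n) N N := by
    rintro n a ⟨x, hxD, hxA⟩
    refine ⟨hpow T n x, ?_, ?_⟩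
    · intro hmem
      apply hxD
      rw [coverBoundaryOrbit, Set.mem_iUnion] at hmem ⊢
      obtain ⟨m, y, hy, hyx⟩ := hmem
      refine ⟨-n + m, y, hy, ?_⟩
      rw [hpow_add, hyx, hpow_neg_cancel]
    · intro m
      rw [shift_hpow, ← hpow_add]
      exact hxA (m + n)
  constructor
  · intro a ha n
    rw [hrep] at ha ⊢
    exact (hNinv n).closure (continuous_hpow _ n) ha
  · intro a ha b hb
    rw [hrep] at ha hb
    rw [mem_closure_pi_discrete]
    intro s
    -- choose a name c close to b
    obtain ⟨c, ⟨y, hyD, hyA⟩, hcb⟩ := mem_closure_pi_discrete.1 hb s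
    -- the open set V
    set V : Set X := ⋂ j ∈ s, hpow T j ⁻¹' interior (A (c j)) with hVdef
    have hVopen : IsOpen V :=
      isOpen_biInter_finset fun j _ =>
        (continuous_hpow T j).isOpen_preimage _ isOpen_interior
    have hyV : y ∈ V := by
      rw [hVdef]
      simp only [Set.mem_iInter, Set.mem_preimage]
      intro j hj
      have h1 : hpow T j y ∈ A (c j) := hyA j
      have h2 : hpow T j y ∉ frontier (A (c j)) := by
        intro hfr
        apply hyD
        rw [coverBoundaryOrbit, Set.mem_iUnion]
        exact ⟨-j, hpow T j y, Set.mem_iUnion.2 ⟨c j, hfr⟩, hpow_neg_cancel T j y⟩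
      rw [(hclosed (c j)).frontier_eq] at h2
      by_contra hni
      exact h2 ⟨h1, hni⟩
    -- minimality: the preimages of V cover X
    have hcov : (Set.univ : Set X) ⊆ ⋃ n : ℤ, hpow T n ⁻¹' V := by
      intro z _
      obtain ⟨v, hvorb, hvV⟩ := (hT z).exists_mem_open hVopen ⟨y, hyV⟩
      obtain ⟨n, rfl⟩ := hvorb
      exact Set.mem_iUnion.2 ⟨n, hvV⟩
    obtain ⟨F, hF⟩ := isCompact_univ.elim_finite_subcover _
      (fun n : ℤ => (continuous_hpow T n).isOpen_preimage _ hVopen) hcov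
    -- choose a name a' close to a on a large window
    obtain ⟨a', ⟨x, hxD, hxA⟩, haa⟩ :=
      mem_closure_pi_discrete.1 ha (Finset.image₂ (· + ·) F s)
    obtain ⟨p, hpF, hpV⟩ := Set.mem_iUnion₂.1 (hF (Set.mem_univ x))
    refine ⟨hpow (shiftH (Fin k)) p a, ⟨p, rfl⟩, ?_⟩
    intro j hj
    rw [shift_hpow]
    have hmemJ : j + p ∈ Finset.image₂ (· + ·) F s := by
      rw [add_comm]
      exact Finset.mem_image₂.2 ⟨p, hpF, j, hj, rfl⟩
    have h1 : a (j + p) = a' (j + p) := (haa _ hmemJ).symm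
    have hVx : hpow T p x ∈ V := hpV
    have hmem3 : hpow T (j + p) x ∈ interior (A (c j)) := by
      rw [hpow_add]
      rw [hVdef] at hVx
      simp only [Set.mem_iInter, Set.mem_preimage] at hVx
      exact hVx j hj
    have h2 : a' (j + p) = c j := by
      by_contra hne
      have hmem2 : hpow T (j + p) x ∈ A (a' (j + p)) := hxA _
      have : hpow T (j + p) x ∈ frontier (A (a' (j + p))) ∩ frontier (A (c j)) := by
        rw [← hpair _ _ hne]
        exact ⟨hmem2, interior_subset hmem3⟩
      have hfr : hpow T (j + p) x ∈ frontier (A (c j)) := this.2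
      rw [(hclosed (c j)).frontier_eq] at hfr
      exact hfr.2 hmem3
    rw [h1, h2]
    exact hcb j hj
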